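/- A multigraded ℕ-ideal J of P̄ is saturated if and only if for every f ∈ P̄ and every j ≥ 1, t(j)·f ∈ J implies f ∈ J. -/

import Mathlib

noncomputable section

/-! ### Common definitions for the letterplace correspondence (La Scala)

`FA K Y` is the free associative algebra `K⟨Y⟩` (monoid algebra of the free monoid on `Y`);
`PL K Y` is the letterplace polynomial algebra `K[y(j) : y ∈ Y, j ∈ ℕ*]`.
The algebra `F̄ = K⟨X ∪ {t}⟩` is modeled as `FA K (Option X)` with `t = none`,
and similarly `P̄ = PL K (Option X)`. -/

/-- The free associative algebra `K⟨Y⟩`. -/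
abbrev FA (K : Type*) [CommSemiring K] (Y : Type*) := MonoidAlgebra K (FreeMonoid Y)

/-- The letterplace polynomial algebra `K[y(j)]`, with places in `ℕ* = ℕ+`. -/
abbrev PL (K : Type*) [CommSemiring K] (Y : Type*) := MvPolynomial (Y × ℕ+) K

variable (K : Type*) [Field K]

/-- The generator of `K⟨Y⟩` corresponding to a letter. -/
def gen {Y : Type*} (y : Y) : FA K Y := MonoidAlgebra.of K (FreeMonoid Y) (FreeMonoid.of y)

/-- The extra letter `t` of `F̄ = K⟨X ∪ {t}⟩`. -/
def tv {X : Type*} : FA K (Option X) := gen K (none : Option X)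

/-- `φ : F̄ → F̄`, the algebra endomorphism with `φ(x_i) = x_i`, `φ(t) = 1`. -/
def phi {X : Type*} : FA K (Option X) →ₐ[K] FA K (Option X) :=
  (MonoidAlgebra.lift K (FA K (Option X)) (FreeMonoid (Option X)))
    (FreeMonoid.lift fun o => Option.elim o 1 (fun x => gen K (some x)))

/-- `f` is homogeneous of degree `d` (all words in its support have length `d`). -/
def IsHomog {Y : Type*} (d : ℕ) (f : FA K Y) : Prop :=
  ∀ w ∈ f.coeff.support, FreeMonoid.length w = d

/-- The homogeneous component of degree `d` of `f ∈ K⟨Y⟩`. -/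
def homComp {Y : Type*} (d : ℕ) (f : FA K Y) : FA K Y :=
  ∑ w ∈ f.coeff.support.filter (fun w => FreeMonoid.length w = d), MonoidAlgebra.single w (f.coeff w)

/-- A two-sided ideal is graded (for the grading by total degree) iff it contains all
homogeneous components of its elements. -/
def IsGradedF {Y : Type*} (I : TwoSidedIdeal (FA K Y)) : Prop := ∀ f ∈ I, ∀ d, homComp K d f ∈ I

/-- `C ⊆ F̄`: the two-sided ideal generated by all homogeneous elements of `ker φ`,
i.e. the largest graded ideal contained in `ker φ`. -/
def Cideal {X : Type*} : TwoSidedIdeal (FA K (Option X)) :=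
  TwoSidedIdeal.span {f | (∃ d, IsHomog K d f) ∧ phi K f = 0}

/-- The embedding of free monoids `X* → (X ∪ {t})*`. -/
def embWord {X : Type*} : FreeMonoid X →* FreeMonoid (Option X) := FreeMonoid.map some

/-- The canonical embedding `F = K⟨X⟩ → F̄ = K⟨X ∪ {t}⟩`. -/
def emb {X : Type*} : FA K X →ₐ[K] FA K (Option X) :=
  (MonoidAlgebra.lift K (FA K (Option X)) (FreeMonoid X))
    ((MonoidAlgebra.of K (FreeMonoid (Option X))).comp embWord)

/-- The top degree `deg(f)` of `f` (max length of a word in the support). -/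
def degF {Y : Type*} (f : FA K Y) : ℕ := f.coeff.support.sup FreeMonoid.length

/-- The homogenization `f^* = Σ_k f_k t^{deg f − k} ∈ F̄` of `f ∈ F`. -/
def hstar {X : Type*} (f : FA K X) : FA K (Option X) :=
  ∑ w ∈ f.coeff.support,
    MonoidAlgebra.single
      (embWord w * (FreeMonoid.of (none : Option X)) ^ (degF K f - FreeMonoid.length w)) (f.coeff w)

/-- Homogenization of an element already written in `F̄` (used for elements of `φ(F̄) = F`). -/
def hstarO {X : Type*} (f : FA K (Option X)) : FA K (Option X) :=
  ∑ w ∈ f.coeff.support,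
    MonoidAlgebra.single
      (w * (FreeMonoid.of (none : Option X)) ^ (degF K f - FreeMonoid.length w)) (f.coeff w)

/-- The homogenization `I^*` of an ideal `I ⊆ F`: the two-sided ideal of `F̄` generated by all
homogeneous elements of `φ⁻¹(I)` (identifying `F` with its image in `F̄`). -/
def hstarIdeal {X : Type*} (I : TwoSidedIdeal (FA K X)) : TwoSidedIdeal (FA K (Option X)) :=
  TwoSidedIdeal.span {g | (∃ d, IsHomog K d g) ∧ ∃ f ∈ I, phi K g = emb K f}

/-- The saturation `Sat(J) = φ(J)^*` of a graded ideal `C ⊆ J ⊆ F̄`: the two-sided ideal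
generated by all homogeneous elements `g` with `φ(g) ∈ φ(J)`. -/
def SatF {X : Type*} (J : TwoSidedIdeal (FA K (Option X))) : TwoSidedIdeal (FA K (Option X)) :=
  TwoSidedIdeal.span {g | (∃ d, IsHomog K d g) ∧ ∃ h ∈ J, phi K g = phi K h}

/-! ### The commutative (letterplace) side -/

/-- The shift of letterplace variables: `k · y(j) = y(j + k)`. -/
def shiftVar {Y : Type*} (k : ℕ) (p : Y × ℕ+) : Y × ℕ+ :=
  (p.1, ⟨p.2 + k, Nat.add_pos_left p.2.2 k⟩)

/-- The action of `k ∈ ℕ` on the letterplace algebra. -/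
def shift {Y : Type*} (k : ℕ) : PL K Y →ₐ[K] PL K Y := MvPolynomial.rename (shiftVar k)

/-- An ideal of `PL K Y` is an ℕ-ideal if it is stable under all shifts. -/
def IsNIdeal {Y : Type*} (I : Ideal (PL K Y)) : Prop := ∀ k, ∀ f ∈ I, shift K k f ∈ I

/-- The ℕ-ideal `⟨S⟩_ℕ` generated by a set `S`. -/
def nspan {Y : Type*} (S : Set (PL K Y)) : Ideal (PL K Y) :=
  Ideal.span {g | ∃ k, ∃ f ∈ S, g = shift K k f}

/-- The place multidegree `∂(m)` of a monomial. -/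
def placeDeg {Y : Type*} (m : (Y × ℕ+) →₀ ℕ) : ℕ+ →₀ ℕ := Finsupp.mapDomain Prod.snd m

/-- `f` is multihomogeneous of place multidegree `μ`. -/
def IsMultiHomog {Y : Type*} (μ : ℕ+ →₀ ℕ) (f : PL K Y) : Prop :=
  ∀ m ∈ f.support, placeDeg m = μ

/-- The multihomogeneous component of multidegree `μ` of `f`. -/
def mComp {Y : Type*} (μ : ℕ+ →₀ ℕ) (f : PL K Y) : PL K Y :=
  ∑ m ∈ f.support.filter (fun m => placeDeg m = μ),
    MvPolynomial.monomial m (MvPolynomial.coeff m f)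

/-- An ideal is multigraded iff it contains all multihomogeneous components of its elements. -/
def IsMultiGraded {Y : Type*} (I : Ideal (PL K Y)) : Prop := ∀ f ∈ I, ∀ μ, mComp K μ f ∈ I

/-- `ψ : P̄ → P̄`, with `ψ(x_i(j)) = x_i(j)` and `ψ(t(j)) = 1`. -/
def psi {X : Type*} : PL K (Option X) →ₐ[K] PL K (Option X) :=
  MvPolynomial.aeval (fun p => Option.elim p.1 1 (fun x => MvPolynomial.X (some x, p.2)))

/-- The canonical embedding `P → P̄`. -/
def embP {X : Type*} : PL K X →ₐ[K] PL K (Option X) :=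
  MvPolynomial.rename (fun p => (some p.1, p.2))

/-- The top multidegree `∂(f)` of `f` (componentwise max over the support). -/
def topDeg {Y : Type*} (f : PL K Y) : ℕ+ →₀ ℕ := f.support.sup placeDeg

/-- The pure-`t` monomial `∏_k t(k)^{ν_k}` with exponents `ν`. -/
def tExp {X : Type*} (ν : ℕ+ →₀ ℕ) : ((Option X) × ℕ+) →₀ ℕ :=
  Finsupp.mapDomain (fun k => ((none : Option X), k)) ν

/-- The multihomogenization `f^* = Σ_μ f_μ ∏_k t(k)^{ν_k − μ_k} ∈ P̄` of `f ∈ P`. -/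
def mhstar {X : Type*} (f : PL K X) : PL K (Option X) :=
  ∑ m ∈ f.support,
    MvPolynomial.monomial
      (Finsupp.mapDomain (fun p => ((some p.1 : Option X), p.2)) m +
        tExp (topDeg K f - placeDeg m))
      (MvPolynomial.coeff m f)

/-- Multihomogenization of an element already written in `P̄` (used for elements of `ψ(P̄) = P`). -/
def mhstarO {X : Type*} (f : PL K (Option X)) : PL K (Option X) :=
  ∑ m ∈ f.support,
    MvPolynomial.monomial (m + tExp (topDeg K f - placeDeg m)) (MvPolynomial.coeff m f)

/-- The multihomogenization `I^*` of an ℕ-ideal `I ⊆ P`: the ℕ-ideal of `P̄` generated by all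
multihomogeneous elements of `ψ⁻¹(I)` (identifying `P` with its image in `P̄`). -/
def mhstarIdeal {X : Type*} (I : Ideal (PL K X)) : Ideal (PL K (Option X)) :=
  nspan K {g | (∃ μ, IsMultiHomog K μ g) ∧ ∃ f ∈ I, psi K g = embP K f}

/-- The saturation `Sat(J) = ψ(J)^*` of a multigraded ℕ-ideal `J ⊆ P̄`. -/
def SatP {X : Type*} (J : Ideal (PL K (Option X))) : Ideal (PL K (Option X)) :=
  nspan K {g | (∃ μ, IsMultiHomog K μ g) ∧ ∃ h ∈ J, psi K g = psi K h}

/-! ### The letterplace embedding -/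

/-- Exponent vector of the letterplace monomial `y_1(n+1) y_2(n+2) ⋯` of a word. -/
def wordExpAux {Y : Type*} : ℕ → List Y → ((Y × ℕ+) →₀ ℕ)
  | _, [] => 0
  | n, y :: w => Finsupp.single (y, ⟨n + 1, n.succ_pos⟩) 1 + wordExpAux (n + 1) w

/-- The letterplace monomial `y_1(1) y_2(2) ⋯ y_d(d)` of a word `y_1 y_2 ⋯ y_d`. -/
def wordExp {Y : Type*} (w : FreeMonoid Y) : (Y × ℕ+) →₀ ℕ := wordExpAux 0 (FreeMonoid.toList w)

/-- The letterplace embedding `ι : K⟨Y⟩ → PL K Y` (a `K`-linear map). -/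
def iota {Y : Type*} (f : FA K Y) : PL K Y :=
  Finsupp.sum f.coeff fun w c => MvPolynomial.monomial (wordExp w) c

/-- The set `L` of multilinear elements of `PL K Y`: multihomogeneous elements of `V = Im ι`. -/
def Lset {Y : Type*} : Set (PL K Y) :=
  {f | f ∈ Set.range (iota K (Y := Y)) ∧ ∃ μ, IsMultiHomog K μ f}

/-- A letterplace ideal (`L`-ideal): an ℕ-ideal ℕ-generated by its multilinear elements. -/
def IsLPIdeal {Y : Type*} (J : Ideal (PL K Y)) : Prop :=
  IsNIdeal K J ∧ J = nspan K ((J : Set (PL K Y)) ∩ Lset K)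

/-- The generators `x_i(1)t(2) − t(1)x_i(2)` of `D`. -/
def Dgens (X : Type*) : Set (PL K (Option X)) :=
  {g | ∃ x : X,
    g = MvPolynomial.X ((some x : Option X), (1 : ℕ+)) *
          MvPolynomial.X ((none : Option X), (2 : ℕ+)) -
        MvPolynomial.X ((none : Option X), (1 : ℕ+)) *
          MvPolynomial.X ((some x : Option X), (2 : ℕ+))}

/-- The generators `ῑ([t, x_i]) = t(1)x_i(2) − x_i(1)t(2)` of `D`. -/
def DgensT (X : Type*) : Set (PL K (Option X)) :=
  {g | ∃ x : X,
    g = MvPolynomial.X ((none : Option X), (1 : ℕ+)) *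
          MvPolynomial.X ((some x : Option X), (2 : ℕ+)) -
        MvPolynomial.X ((some x : Option X), (1 : ℕ+)) *
          MvPolynomial.X ((none : Option X), (2 : ℕ+))}

/-- `D ⊆ P̄`: the letterplace analogue of `C`. -/
def Did (X : Type*) : Ideal (PL K (Option X)) := nspan K (Dgens K X)

/-- The product `∏_{d < k ≤ d'} t(k)`. -/
def tProd (X : Type*) (d d' : ℕ) : PL K (Option X) :=
  ∏ k ∈ Finset.range (d' - d), MvPolynomial.X ((none : Option X), ⟨d + k + 1, Nat.succ_pos _⟩)

/-- The `L`-saturation `Sat_L(J)` of a letterplace ideal `D ⊆ J ⊆ P̄`. -/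
def SatL {X : Type*} (J : Ideal (PL K (Option X))) : Ideal (PL K (Option X)) :=
  nspan K {f | f ∈ Lset K ∧ ∃ d', MvPolynomial.totalDegree f ≤ d' ∧
    tProd K X (MvPolynomial.totalDegree f) d' * f ∈ J}

/-- `J` is `L`-saturated: `t(d+1)·f ∈ J` with `f` multilinear of degree `d` implies `f ∈ J`. -/
def IsLSat {X : Type*} (J : Ideal (PL K (Option X))) : Prop :=
  ∀ f ∈ Lset K (Y := Option X),
    MvPolynomial.X ((none : Option X), ⟨MvPolynomial.totalDegree f + 1, Nat.succ_pos _⟩) * f ∈ J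
      → f ∈ J

/-! ### Monomial orderings -/

/-- The shift action on letterplace monomials. -/
def shiftMon {Y : Type*} (k : ℕ) (m : (Y × ℕ+) →₀ ℕ) : (Y × ℕ+) →₀ ℕ :=
  Finsupp.mapDomain (shiftVar k) m

/-- A monomial ordering of a (possibly infinite) commutative polynomial ring, given as a strict
order relation on exponent vectors: a well-founded strict total order with `1` minimal,
compatible with multiplication of monomials. -/
structure IsMonOrd {σ : Type*} (r : (σ →₀ ℕ) → (σ →₀ ℕ) → Prop) : Prop where
  total : ∀ m n, r m n ∨ m = n ∨ r n m
  irrefl : ∀ m, ¬ r m m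
  trans : ∀ a b c, r a b → r b c → r a c
  wf : WellFounded r
  zero_min : ∀ m, ¬ r m 0
  add_compat : ∀ m n u, r m n → r (u + m) (u + n)

/-- The ordering is compatible with the ℕ-action (an `ℕ`-ordering). -/
def IsNCompat {Y : Type*} (r : ((Y × ℕ+) →₀ ℕ) → ((Y × ℕ+) →₀ ℕ) → Prop) : Prop :=
  ∀ (k : ℕ) m n, r m n → r (shiftMon k m) (shiftMon k n)

/-- The weight of a letterplace monomial: the largest place index occurring in it
(`⊥ = -∞` for the monomial `1`). -/
def wt {Y : Type*} (m : (Y × ℕ+) →₀ ℕ) : WithBot ℕ :=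
  m.support.sup (fun p => ((p.2 : ℕ) : WithBot ℕ))

/-- A weighted ordering: smaller weight implies smaller monomial. -/
def IsWeighted {Y : Type*} (r : ((Y × ℕ+) →₀ ℕ) → ((Y × ℕ+) →₀ ℕ) → Prop) : Prop :=
  ∀ m n, wt m < wt n → r m n

/-- A monomial ordering of the free algebra `K⟨Y⟩`: a well-founded strict total order on words
compatible with two-sided multiplication. -/
structure IsWordOrd {Y : Type*} (r : FreeMonoid Y → FreeMonoid Y → Prop) : Prop where
  total : ∀ m n, r m n ∨ m = n ∨ r n m
  irrefl : ∀ m, ¬ r m m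
  trans : ∀ a b c, r a b → r b c → r a c
  wf : WellFounded r
  mul_compat : ∀ m n u v, r m n → r (u * m * v) (u * n * v)

/-- A word ordering is graded if shorter words are smaller. -/
def IsGradedWordOrd {Y : Type*} (r : FreeMonoid Y → FreeMonoid Y → Prop) : Prop :=
  ∀ m n, FreeMonoid.length m < FreeMonoid.length n → r m n

/-- The word ordering of `K⟨Y⟩` induced by a monomial ordering of `PL K Y` via `ι`. -/
def inducedWordOrd {Y : Type*} (r : ((Y × ℕ+) →₀ ℕ) → ((Y × ℕ+) →₀ ℕ) → Prop)
    (m n : FreeMonoid Y) : Prop := r (wordExp m) (wordExp n)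

/-- The factor of a letterplace monomial at place `j` (a monomial of `P(j) ≅ P(1)`). -/
def fiber {Y : Type*} (m : (Y × ℕ+) →₀ ℕ) (j : ℕ+) : Y →₀ ℕ :=
  Finsupp.comapDomain (fun y => (y, j)) m (fun _ _ _ _ h => congrArg Prod.fst h)

/-- The place `ℕ`-ordering of `PL K Y` induced by a monomial ordering `r1` of `P(1)`:
compare the factors at the highest place where the two monomials differ. -/
def placeExt {Y : Type*} (r1 : (Y →₀ ℕ) → (Y →₀ ℕ) → Prop)
    (m n : (Y × ℕ+) →₀ ℕ) : Prop :=
  ∃ j : ℕ+, r1 (fiber m j) (fiber n j) ∧ ∀ j', j < j' → fiber m j' = fiber n j'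

/-! ### Leading monomials and Gröbner bases -/

/-- `m` is the leading monomial of `f ∈ PL K Y` with respect to the ordering `r`. -/
def IsLM {Y : Type*} (r : ((Y × ℕ+) →₀ ℕ) → ((Y × ℕ+) →₀ ℕ) → Prop)
    (f : PL K Y) (m : (Y × ℕ+) →₀ ℕ) : Prop :=
  m ∈ f.support ∧ ∀ m' ∈ f.support, m' ≠ m → r m' m

/-- `LM(S)`: the ideal generated by the leading monomials of the nonzero elements of `S`. -/
def LMideal {Y : Type*} (r : ((Y × ℕ+) →₀ ℕ) → ((Y × ℕ+) →₀ ℕ) → Prop)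
    (S : Set (PL K Y)) : Ideal (PL K Y) :=
  Ideal.span {p | ∃ f ∈ S, f ≠ 0 ∧ ∃ m, IsLM K r f m ∧ p = MvPolynomial.monomial m (1 : K)}

/-- The ideal generated by `ℕ·lm(G)`. -/
def shLMideal {Y : Type*} (r : ((Y × ℕ+) →₀ ℕ) → ((Y × ℕ+) →₀ ℕ) → Prop)
    (G : Set (PL K Y)) : Ideal (PL K Y) :=
  Ideal.span {p | ∃ g ∈ G, g ≠ 0 ∧ ∃ m, IsLM K r g m ∧
    ∃ k : ℕ, p = MvPolynomial.monomial (shiftMon k m) (1 : K)}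

/-- `G ⊆ I` is a Gröbner `ℕ`-basis of the ℕ-ideal `I`: `ℕ·lm(G)` generates `LM(I)`. -/
def IsGroebnerNB {Y : Type*} (r : ((Y × ℕ+) →₀ ℕ) → ((Y × ℕ+) →₀ ℕ) → Prop)
    (I : Ideal (PL K Y)) (G : Set (PL K Y)) : Prop :=
  G ⊆ (I : Set (PL K Y)) ∧ shLMideal K r G = LMideal K r (I : Set (PL K Y))

/-- `G` is a Gröbner `L`-basis of the letterplace ideal `J`: `G ⊆ J ∩ L` and the leading monomial
of every nonzero multilinear element of `J` is divisible by a shift of some `lm(g)`, `g ∈ G`. -/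
def IsGroebnerLB {Y : Type*} (r : ((Y × ℕ+) →₀ ℕ) → ((Y × ℕ+) →₀ ℕ) → Prop)
    (J : Ideal (PL K Y)) (G : Set (PL K Y)) : Prop :=
  G ⊆ (J : Set (PL K Y)) ∩ Lset K ∧
  ∀ f ∈ (J : Set (PL K Y)) ∩ Lset K, f ≠ 0 →
    ∃ g ∈ G, ∃ (k : ℕ) (mg mf : (Y × ℕ+) →₀ ℕ),
      IsLM K r g mg ∧ IsLM K r f mf ∧ shiftMon k mg ≤ mf

/-- `w` is the leading monomial (word) of `f ∈ K⟨Y⟩` with respect to the word ordering `r'`. -/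
def IsLMF {Y : Type*} (r' : FreeMonoid Y → FreeMonoid Y → Prop)
    (f : FA K Y) (w : FreeMonoid Y) : Prop :=
  w ∈ f.coeff.support ∧ ∀ w' ∈ f.coeff.support, w' ≠ w → r' w' w

/-- `G ⊆ I` is a Gröbner basis of the two-sided ideal `I ⊆ K⟨Y⟩`: the leading word of every
nonzero `f ∈ I` has the form `u · lm(g) · v` for some nonzero `g ∈ G`. -/
def IsGroebnerBF {Y : Type*} (r' : FreeMonoid Y → FreeMonoid Y → Prop)
    (I : TwoSidedIdeal (FA K Y)) (G : Set (FA K Y)) : Prop :=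
  G ⊆ (I : Set (FA K Y)) ∧
  ∀ f ∈ I, f ≠ 0 → ∃ g ∈ G, g ≠ 0 ∧ ∃ (u v wf wg : FreeMonoid Y),
    IsLMF K r' f wf ∧ IsLMF K r' g wg ∧ wf = u * wg * v

/-! ### Normal forms -/

/-- The generators `x_i(1) x_j(1)` of `N`. -/
def Ngens (Y : Type*) : Set (PL K Y) :=
  {g | ∃ i j : Y, g = MvPolynomial.X (i, (1 : ℕ+)) * MvPolynomial.X (j, (1 : ℕ+))}

/-- A polynomial is in normal form modulo `N` iff in each of its monomials all place indices
are pairwise distinct. -/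
def NormalModN {Y : Type*} (f : PL K Y) : Prop :=
  ∀ m ∈ f.support, ∀ k : ℕ+, placeDeg m k ≤ 1

/-- A polynomial is in normal form modulo `D` iff none of its monomials is divisible by a shift
of the leading monomial of some generator `t(1)x_i(2) − x_i(1)t(2)` of `D`. -/
def NormalModD {X : Type*} (r : (((Option X) × ℕ+) →₀ ℕ) → (((Option X) × ℕ+) →₀ ℕ) → Prop)
    (f : PL K (Option X)) : Prop :=
  ∀ m ∈ f.support, ∀ g ∈ DgensT K X, ∀ mg, IsLM K r g mg → ∀ k : ℕ, ¬ shiftMon k mg ≤ m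

/-- `G` is a Gröbner `L`-basis of `J` modulo `D`: its elements are multilinear elements of `J`
in normal form modulo `D`, and together with the generators of `D` they form a
Gröbner `L`-basis of `J`. -/
def IsGroebnerLBmodD {X : Type*}
    (r : (((Option X) × ℕ+) →₀ ℕ) → (((Option X) × ℕ+) →₀ ℕ) → Prop)
    (J : Ideal (PL K (Option X))) (G : Set (PL K (Option X))) : Prop :=
  (∀ g ∈ G, g ∈ (J : Set (PL K (Option X))) ∩ Lset K ∧ NormalModD K r g) ∧
  IsGroebnerLB K r J (G ∪ DgensT K X)

/-- The commutators `[t, x_i] = t x_i − x_i t` in `F̄`. -/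
def commGens (X : Type*) : Set (FA K (Option X)) :=
  {h | ∃ x : X, h = tv K * gen K (some x) - gen K (some x) * tv K}

/-- A polynomial of `F̄` is in normal form modulo `C` iff none of its words contains the leading
word of some commutator `[t, x_i]` as a factor. -/
def NormalModC {X : Type*} (r' : FreeMonoid (Option X) → FreeMonoid (Option X) → Prop)
    (f : FA K (Option X)) : Prop :=
  ∀ w ∈ f.coeff.support, ∀ g ∈ commGens K X, ∀ wg, IsLMF K r' g wg →
    ¬ ∃ u v, w = u * wg * v

/-! ### Concrete orderings on words -/

/-- The order on the letters of `X ∪ {t}` (with `X = ℕ`): `t ≺ x_1 ≺ x_2 ≺ ⋯`. -/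
def optLt : Option ℕ → Option ℕ → Prop
  | none, some _ => True
  | some i, some j => i < j
  | _, none => False

/-- The graded right lexicographic ordering on words: first compare lengths, then compare
letter by letter from the right. -/
def grRightLex {Y : Type*} (lt : Y → Y → Prop) (dflt : Y) (m n : FreeMonoid Y) : Prop :=
  FreeMonoid.length m < FreeMonoid.length n ∨
  (FreeMonoid.length m = FreeMonoid.length n ∧
    ∃ t < FreeMonoid.length m,
      lt ((FreeMonoid.toList m).getD t dflt) ((FreeMonoid.toList n).getD t dflt) ∧
      ∀ s, t < s → (FreeMonoid.toList m).getD s dflt = (FreeMonoid.toList n).getD s dflt)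

end

noncomputable section Lemmas
open MvPolynomial

variable {K : Type*} [Field K] {X : Type*}

lemma shift_zero {Y : Type*} (f : PL K Y) : shift K 0 f = f := by
  have h : shiftVar 0 = (id : Y × ℕ+ → Y × ℕ+) := by
    funext p
    unfold shiftVar
    exact Prod.ext rfl (Subtype.ext (Nat.add_zero _))
  unfold shift
  rw [h, rename_id]
  rfl

lemma placeDeg_add {Y : Type*} (a b : (Y × ℕ+) →₀ ℕ) :
    placeDeg (a + b) = placeDeg a + placeDeg b := Finsupp.mapDomain_add

lemma placeDeg_single {Y : Type*} (p : Y × ℕ+) (n : ℕ) :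
    placeDeg (Finsupp.single p n) = Finsupp.single p.2 n := Finsupp.mapDomain_single

lemma tExp_add (a b : ℕ+ →₀ ℕ) : (tExp (a + b) : (Option X × ℕ+) →₀ ℕ) = tExp a + tExp b :=
  Finsupp.mapDomain_add

lemma tExp_single (j : ℕ+) (n : ℕ) :
    (tExp (Finsupp.single j n) : (Option X × ℕ+) →₀ ℕ) = Finsupp.single (none, j) n :=
  Finsupp.mapDomain_single

lemma tExp_zero : (tExp 0 : (Option X × ℕ+) →₀ ℕ) = 0 := Finsupp.mapDomain_zero

/-- The part of a monomial not involving `t`. -/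
def stripT (m : (Option X × ℕ+) →₀ ℕ) : (Option X × ℕ+) →₀ ℕ :=
  m.filter (fun p => p.1.isSome = true)

lemma stripT_decomp (m : (Option X × ℕ+) →₀ ℕ) :
    m = stripT m + tExp (placeDeg m - placeDeg (stripT m)) := by
  have h1 : stripT m + m.filter (fun p => ¬ p.1.isSome = true) = m :=
    Finsupp.filter_pos_add_filter_neg m _
  set q := m.filter (fun p => ¬ (p.1).isSome = true) with hq
  have h2 : tExp (placeDeg q) = q := by
    unfold tExp placeDeg
    rw [← Finsupp.mapDomain_comp]
    rw [Finsupp.mapDomain_congr (g := id), Finsupp.mapDomain_id]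
    intro p hp
    rw [hq, Finsupp.support_filter, Finset.mem_filter] at hp
    have : p.1 = none := Option.not_isSome_iff_eq_none.mp hp.2
    exact Prod.ext this.symm rfl
  have h3 : placeDeg m = placeDeg (stripT m) + placeDeg q := by
    have := congrArg placeDeg h1
    rw [placeDeg_add] at this
    exact this.symm
  rw [h3, add_tsub_cancel_left, h2, h1]

lemma placeDeg_stripT_le (m : (Option X × ℕ+) →₀ ℕ) :
    placeDeg (stripT m) ≤ placeDeg m := by
  conv_rhs => rw [stripT_decomp m, placeDeg_add]
  exact le_self_add

lemma psi_monomial (m : (Option X × ℕ+) →₀ ℕ) (c : K) :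
    psi K (monomial m c) = monomial (stripT m) c := by
  unfold psi
  rw [aeval_monomial, monomial_eq, algebraMap_eq]
  congr 1
  unfold Finsupp.prod
  rw [← Finset.prod_filter_mul_prod_filter_not m.support (fun p => p.1.isSome = true)]
  have h2 : ∏ p ∈ m.support.filter (fun p => ¬ p.1.isSome = true),
      (Option.elim p.1 1 (fun x => (MvPolynomial.X (some x, p.2) : PL K (Option X)))) ^ m p = 1 := by
    apply Finset.prod_eq_one
    intro p hp
    rw [Finset.mem_filter] at hp
    rw [Option.not_isSome_iff_eq_none.mp hp.2]
    simp
  rw [h2, mul_one]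
  rw [show (stripT m).support = m.support.filter (fun p => p.1.isSome = true) from
    Finsupp.support_filter _ _]
  apply Finset.prod_congr rfl
  intro p hp
  rw [Finset.mem_filter] at hp
  obtain ⟨x, hx⟩ := Option.isSome_iff_exists.mp hp.2
  have hsp : (stripT m) p = m p := Finsupp.filter_apply_pos _ _ hp.2
  have hpe : ((some x : Option X), p.2) = p := Prod.ext hx.symm rfl
  simp [hx, hsp, hpe]

lemma psi_X_none (j : ℕ+) : psi K (MvPolynomial.X ((none : Option X), j)) = 1 := by
  unfold psi
  rw [aeval_X]
  rfl

section lamsec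
variable (ρ : ℕ+ →₀ ℕ)

def lamF (n : (Option X × ℕ+) →₀ ℕ) : (Option X × ℕ+) →₀ ℕ := n + tExp (ρ - placeDeg n)

def lam : PL K (Option X) →+ PL K (Option X) :=
  AddMonoidHom.mk' (fun f => AddMonoidAlgebra.mapDomain (lamF ρ) f) (fun _ _ => AddMonoidAlgebra.mapDomain_add _ _ _)

lemma lam_monomial (n : (Option X × ℕ+) →₀ ℕ) (c : K) :
    lam (K := K) (X := X) ρ (monomial n c) = monomial (lamF ρ n) c := by
  show AddMonoidAlgebra.mapDomain (lamF ρ) (monomial n c) = monomial (lamF ρ n) c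
  rw [← single_eq_monomial, ← single_eq_monomial]
  exact AddMonoidAlgebra.mapDomain_single

lemma lam_psi {μ : ℕ+ →₀ ℕ} {f : PL K (Option X)} (hf : IsMultiHomog K μ f) (hμρ : μ ≤ ρ) :
    lam ρ (psi K f) = monomial (tExp (ρ - μ)) (1 : K) * f := by
  conv_lhs => rw [← support_sum_monomial_coeff f]
  conv_rhs => rw [← support_sum_monomial_coeff f]
  rw [map_sum, map_sum, Finset.mul_sum]
  apply Finset.sum_congr rfl
  intro m hm
  rw [psi_monomial, lam_monomial, monomial_mul, one_mul]
  congr 1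
  have hd : placeDeg m = μ := hf m hm
  have hle : placeDeg (stripT m) ≤ μ := hd ▸ placeDeg_stripT_le m
  unfold lamF
  conv_rhs => rw [stripT_decomp m, hd]
  have harith : ρ - placeDeg (stripT m) = (ρ - μ) + (μ - placeDeg (stripT m)) :=
    (tsub_add_tsub_cancel hμρ hle).symm
  rw [harith, tExp_add]
  abel

end lamsec

lemma coeff_mComp {Y : Type*} (μ : ℕ+ →₀ ℕ) (f : PL K Y) (m : (Y × ℕ+) →₀ ℕ) :
    coeff m (mComp K μ f) = if placeDeg m = μ then coeff m f else 0 := by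
  classical
  unfold mComp
  rw [coeff_sum]
  simp only [coeff_monomial]
  rw [Finset.sum_ite_eq']
  by_cases h1 : placeDeg m = μ <;> by_cases h2 : m ∈ f.support <;>
    simp [Finset.mem_filter, h1, h2]
  · exact (MvPolynomial.notMem_support_iff.mp h2).symm

lemma isMultiHomog_mComp {Y : Type*} (μ : ℕ+ →₀ ℕ) (f : PL K Y) :
    IsMultiHomog K μ (mComp K μ f) := by
  intro m hm
  rw [mem_support_iff, coeff_mComp] at hm
  by_contra h
  rw [if_neg h] at hm
  exact hm rfl

lemma sum_mComp {Y : Type*} (f : PL K Y) :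
    ∑ μ ∈ f.support.image placeDeg, mComp K μ f = f := by
  classical
  unfold mComp
  rw [Finset.sum_fiberwise_of_maps_to (fun m hm => Finset.mem_image_of_mem _ hm)]
  exact support_sum_monomial_coeff f

end Lemmas

noncomputable section Lemmas2
open MvPolynomial
variable {K : Type*} [Field K] {X : Type*}

lemma mComp_X_mul (j : ℕ+) (μ : ℕ+ →₀ ℕ) (f : PL K (Option X)) :
    mComp K (μ + Finsupp.single j 1) (MvPolynomial.X ((none : Option X), j) * f) =
      MvPolynomial.X ((none : Option X), j) * mComp K μ f := by
  classical
  apply MvPolynomial.ext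
  intro m
  rw [coeff_mComp, coeff_X_mul', coeff_X_mul', coeff_mComp]
  by_cases hmem : ((none : Option X), j) ∈ m.support
  · rw [if_pos hmem, if_pos hmem]
    have hdec : (m - Finsupp.single ((none : Option X), j) 1) +
        Finsupp.single ((none : Option X), j) 1 = m := by
      apply tsub_add_cancel_of_le
      rw [Finsupp.single_le_iff]
      exact Nat.one_le_iff_ne_zero.mpr (Finsupp.mem_support_iff.mp hmem)
    have hpd : placeDeg m =
        placeDeg (m - Finsupp.single ((none : Option X), j) 1) + Finsupp.single j 1 := by
      conv_lhs => rw [← hdec]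
      rw [placeDeg_add, placeDeg_single]
    rw [hpd]
    by_cases hc : placeDeg (m - Finsupp.single ((none : Option X), j) 1) = μ
    · rw [if_pos hc, if_pos (by rw [hc])]
    · rw [if_neg hc, if_neg (fun hh => hc ((add_left_inj _).mp hh))]
  · rw [if_neg hmem, if_neg hmem, ite_self]

lemma cancel_t (J : Ideal (PL K (Option X)))
    (hc : ∀ (f : PL K (Option X)) (j : ℕ+), MvPolynomial.X ((none : Option X), j) * f ∈ J → f ∈ J) :
    ∀ (N : ℕ) (τ : ℕ+ →₀ ℕ) (f : PL K (Option X)), (τ.sum fun _ n => n) ≤ N →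
      monomial (tExp τ) (1 : K) * f ∈ J → f ∈ J := by
  intro N
  induction N with
  | zero =>
    intro τ f hs hm
    have hτ : τ = 0 := by
      ext k
      by_contra hk
      have h1 : 1 ≤ τ k := Nat.one_le_iff_ne_zero.mpr hk
      have h2 : τ k ≤ τ.sum fun _ n => n :=
        Finset.single_le_sum (f := fun k => τ k) (fun _ _ => Nat.zero_le _)
          (Finsupp.mem_support_iff.mpr hk)
      omega
    rw [hτ, tExp_zero, monomial_zero', C_1, one_mul] at hm
    exact hm
  | succ N ih =>
    intro τ f hs hm
    by_cases h0 : τ = 0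
    · rw [h0, tExp_zero, monomial_zero', C_1, one_mul] at hm
      exact hm
    · obtain ⟨j, hj⟩ := Finsupp.support_nonempty_iff.mpr h0
      have hj1 : 1 ≤ τ j := Nat.one_le_iff_ne_zero.mpr (Finsupp.mem_support_iff.mp hj)
      have hτ : (τ - Finsupp.single j 1) + Finsupp.single j 1 = τ :=
        tsub_add_cancel_of_le (Finsupp.single_le_iff.mpr hj1)
      have hsum : ((τ - Finsupp.single j 1).sum fun _ n => n) + 1 = τ.sum fun _ n => n := by
        conv_rhs => rw [← hτ]
        rw [Finsupp.sum_add_index' (fun _ => rfl) (fun _ _ _ => rfl)]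
        rw [Finsupp.sum_single_index rfl]
      have hmon : monomial (tExp τ) (1 : K) =
          monomial (tExp (τ - Finsupp.single j 1)) 1 * MvPolynomial.X ((none : Option X), j) := by
        rw [show MvPolynomial.X ((none : Option X), j) =
              monomial (Finsupp.single ((none : Option X), j) 1) (1 : K) from rfl,
            monomial_mul, mul_one, ← tExp_single j 1, ← tExp_add, hτ]
      rw [hmon, mul_assoc] at hm
      exact hc f j (ih (τ - Finsupp.single j 1) (MvPolynomial.X ((none : Option X), j) * f)
        (by omega) hm)

lemma key_lemma (J : Ideal (PL K (Option X))) (hMG : ∀ f ∈ J, ∀ μ, mComp K μ f ∈ J)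
    {g h : PL K (Option X)} {ν : ℕ+ →₀ ℕ} (hg : IsMultiHomog K ν g) (hh : h ∈ J)
    (he : psi K g = psi K h) :
    ∃ τ : ℕ+ →₀ ℕ, monomial (tExp τ) (1 : K) * g ∈ J := by
  classical
  set ρ := ν + topDeg K h with hρ
  refine ⟨ρ - ν, ?_⟩
  have h1 : monomial (tExp (ρ - ν)) (1 : K) * g = lam ρ (psi K g) :=
    (lam_psi ρ hg le_self_add).symm
  rw [h1, he]
  have h2 : lam ρ (psi K h) = ∑ μ ∈ h.support.image placeDeg, lam ρ (psi K (mComp K μ h)) := by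
    conv_lhs => rw [← sum_mComp h]
    rw [map_sum, map_sum]
  rw [h2]
  apply Ideal.sum_mem
  intro μ hμ
  have hμρ : μ ≤ ρ := by
    obtain ⟨m, hm, rfl⟩ := Finset.mem_image.mp hμ
    calc placeDeg m ≤ topDeg K h := Finset.le_sup hm
    _ ≤ ρ := le_add_self
  rw [lam_psi ρ (isMultiHomog_mComp μ h) hμρ]
  exact Ideal.mul_mem_left _ _ (hMG h hh μ)

lemma mem_SatP {J : Ideal (PL K (Option X))} {g : PL K (Option X)} (μ : ℕ+ →₀ ℕ)
    (hg : IsMultiHomog K μ g) (h : PL K (Option X)) (hh : h ∈ J) (he : psi K g = psi K h) :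
    g ∈ SatP K J := by
  unfold SatP nspan
  exact Ideal.subset_span ⟨0, g, ⟨⟨μ, hg⟩, h, hh, he⟩, (shift_zero g).symm⟩

end Lemmas2

/-- A multigraded ℕ-ideal `J ⊆ P̄` is saturated (`J = Sat(J) = ψ(J)^*`) if and
only if `t(j)·f ∈ J` implies `f ∈ J`, for every `f ∈ P̄ ` and `j ≥ 1`. -/
theorem statement_5 (K : Type*) [Field K] (X : Type*) [Countable X]
    (J : Ideal (PL K (Option X))) (hN : IsNIdeal K J) (hMG : IsMultiGraded K J) :
    SatP K J = J ↔
      ∀ (f : PL K (Option X)) (j : ℕ+),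
        MvPolynomial.X ((none : Option X), j) * f ∈ J → f ∈ J := by
  constructor
  · intro hSat f j hXf
    rw [← hSat]
    rw [← sum_mComp f]
    apply Ideal.sum_mem
    intro μ _
    refine mem_SatP μ (isMultiHomog_mComp μ f)
      (MvPolynomial.X ((none : Option X), j) * mComp K μ f) ?_ ?_
    · rw [← mComp_X_mul]
      exact hMG _ hXf _
    · rw [map_mul, psi_X_none, one_mul]
  · intro hc
    apply le_antisymm
    · unfold SatP nspan
      rw [Ideal.span_le]
      rintro p ⟨k, g, ⟨⟨μ, hmh⟩, h, hh, he⟩, rfl⟩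
      have hg : g ∈ J := by
        obtain ⟨τ, hτ⟩ := key_lemma J hMG hmh hh he
        exact cancel_t J hc (τ.sum fun _ n => n) τ g le_rfl hτ
      exact hN k g hg
    · intro f hf
      rw [← sum_mComp f]
      exact Ideal.sum_mem _
        (fun μ _ => mem_SatP μ (isMultiHomog_mComp μ f) (mComp K μ f) (hMG f hf μ) rfl)
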